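/- For every real δ with 0 ≤ δ < 1/2 and h(δ) < 1/2, there exists a natural number N such that for every even n ≥ N there exists an F₂-linear code C ⊆ F₂ⁿ of dimension n/2 with the property that every nonzero codeword of C has Hamming weight at least δ·n, and every nonzero element of the dual code C⊥ also has Hamming weight at least δ·n. -/

import Mathlib

/-- Binary entropy function (base-2 logs), with the convention `0 * log 0 = 0`. -/
noncomputable def binEnt (x : ℝ) : ℝ :=
  -(x * Real.logb 2 x) - (1 - x) * Real.logb 2 (1 - x)

open Finset

lemma weight_eq_prod {ι : Type*} [Fintype ι] [DecidableEq ι] (δ : ℝ) (x : ι → ZMod 2) :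
    δ ^ (hammingNorm x) * (1 - δ) ^ (Fintype.card ι - hammingNorm x)
      = ∏ i, (if x i ≠ 0 then δ else 1 - δ) := by
  rw [← Finset.prod_filter_mul_prod_filter_not Finset.univ (fun i => x i ≠ 0)]
  rw [Finset.prod_congr rfl (fun i hi => if_pos (Finset.mem_filter.mp hi).2),
    Finset.prod_congr rfl (fun i hi => if_neg ((Finset.mem_filter.mp hi).2 : ¬ _)),
    Finset.prod_const, Finset.prod_const]
  congr 1
  congr 1
  · have := Finset.card_filter_add_card_filter_not (s := Finset.univ)
      (p := fun i => x i ≠ 0)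
    simp only [Finset.card_univ] at this
    have hn : hammingNorm x = (Finset.filter (fun i => x i ≠ 0) Finset.univ).card := rfl
    omega

lemma sum_weights {ι : Type*} [Fintype ι] [DecidableEq ι] (δ : ℝ) :
    ∑ x : ι → ZMod 2, δ ^ (hammingNorm x) * (1 - δ) ^ (Fintype.card ι - hammingNorm x) = 1 := by
  have : ∀ x : ι → ZMod 2, δ ^ (hammingNorm x) * (1-δ) ^ (Fintype.card ι - hammingNorm x)
      = ∏ i, (if x i ≠ 0 then δ else 1 - δ) := weight_eq_prod δ
  calc ∑ x : ι → ZMod 2, δ ^ (hammingNorm x) * (1 - δ) ^ (Fintype.card ι - hammingNorm x)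
      = ∑ x : ι → ZMod 2, ∏ i, (if x i ≠ 0 then δ else 1 - δ) := by
        exact Finset.sum_congr rfl fun x _ => this x
    _ = ∏ i : ι, ∑ a : ZMod 2, (if a ≠ 0 then δ else 1 - δ) := by
        rw [Finset.prod_univ_sum]
        rw [Fintype.piFinset_univ]
    _ = 1 := by
        have : ∀ i : ι, (∑ a : ZMod 2, (if a ≠ 0 then δ else 1 - δ)) = 1 := by
          intro i
          rw [show (Finset.univ : Finset (ZMod 2)) = {0, 1} from rfl]
          simp
        rw [Finset.prod_congr rfl (fun i _ => this i), Finset.prod_const_one]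

lemma pow_entropy_eq {δ : ℝ} (h0 : 0 < δ) (h2 : δ < 1/2) (n : ℝ) :
    δ ^ (δ * n) * (1 - δ) ^ (n - δ * n) = (2:ℝ) ^ (-(binEnt δ * n)) := by
  have h1 : (0:ℝ) < 1 - δ := by linarith
  have e1 : δ = (2:ℝ) ^ (Real.logb 2 δ) := (Real.rpow_logb two_pos (by norm_num) h0).symm
  have e2 : (1 - δ) = (2:ℝ) ^ (Real.logb 2 (1 - δ)) :=
    (Real.rpow_logb two_pos (by norm_num) h1).symm
  calc δ ^ (δ * n) * (1 - δ) ^ (n - δ * n)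
      = ((2:ℝ) ^ (Real.logb 2 δ)) ^ (δ * n) * ((2:ℝ) ^ (Real.logb 2 (1-δ))) ^ (n - δ * n) := by
        rw [← e1, ← e2]
    _ = (2:ℝ) ^ (Real.logb 2 δ * (δ * n)) * (2:ℝ) ^ (Real.logb 2 (1-δ) * (n - δ * n)) := by
        rw [← Real.rpow_mul (by norm_num), ← Real.rpow_mul (by norm_num)]
    _ = (2:ℝ) ^ (Real.logb 2 δ * (δ * n) + Real.logb 2 (1-δ) * (n - δ * n)) := by
        rw [← Real.rpow_add two_pos]
    _ = (2:ℝ) ^ (-(binEnt δ * n)) := by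
        congr 1
        unfold binEnt
        ring

lemma weight_lower {δ : ℝ} (h0 : 0 < δ) (h2 : δ < 1/2) {n m : ℕ} (hmn : m ≤ n)
    (hm : (m:ℝ) ≤ δ * n) :
    (2:ℝ) ^ (-(binEnt δ * n)) ≤ δ ^ m * (1 - δ) ^ (n - m) := by
  have h1 : (0:ℝ) < 1 - δ := by linarith
  have hr0 : (0:ℝ) < δ / (1 - δ) := div_pos h0 h1
  have hr1 : δ / (1 - δ) ≤ 1 := by
    rw [div_le_one h1]; linarith
  have key : ∀ y : ℝ, 0 ≤ y → y ≤ (n:ℝ) →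
      δ ^ y * (1 - δ) ^ ((n:ℝ) - y) = (1 - δ) ^ (n:ℝ) * (δ / (1 - δ)) ^ y := by
    intro y hy hyn
    rw [Real.div_rpow h0.le h1.le, Real.rpow_sub h1]
    field_simp
  have hcast : ((n - m : ℕ) : ℝ) = (n:ℝ) - (m:ℝ) := by
    rw [Nat.cast_sub hmn]
  have lhs_eq : δ ^ m * (1 - δ) ^ (n - m) = δ ^ ((m:ℕ):ℝ) * (1 - δ) ^ ((n:ℝ) - (m:ℝ)) := by
    rw [← hcast, Real.rpow_natCast, Real.rpow_natCast]
  rw [lhs_eq, key _ (Nat.cast_nonneg m) (by exact_mod_cast hmn)]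
  have hδn : δ * n ≤ (n:ℝ) := by
    nlinarith [Nat.cast_nonneg (α := ℝ) n]
  rw [← pow_entropy_eq h0 h2 (n:ℝ), key _ (by positivity) hδn]
  have : (δ / (1 - δ)) ^ (δ * (n:ℝ)) ≤ (δ / (1 - δ)) ^ ((m:ℕ):ℝ) :=
    Real.rpow_le_rpow_of_exponent_ge hr0 hr1 hm
  have hpos : (0:ℝ) < (1 - δ) ^ (n:ℝ) := Real.rpow_pos_of_pos h1 _
  nlinarith [this, hpos]

lemma card_small_le {ι : Type*} [Fintype ι] [DecidableEq ι] {δ : ℝ} (h0 : 0 < δ)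
    (h2 : δ < 1/2) :
    (((Finset.univ.filter fun x : ι → ZMod 2 =>
        (hammingNorm x : ℝ) ≤ δ * (Fintype.card ι)).card : ℝ))
      ≤ (2:ℝ) ^ (binEnt δ * (Fintype.card ι)) := by
  classical
  set n := Fintype.card ι with hn
  set S := Finset.univ.filter fun x : ι → ZMod 2 => (hammingNorm x : ℝ) ≤ δ * n with hS
  have h1 : (0:ℝ) < 1 - δ := by linarith
  have hq : (0:ℝ) < (2:ℝ) ^ (-(binEnt δ * n)) := Real.rpow_pos_of_pos two_pos _
  have step : (S.card : ℝ) * (2:ℝ) ^ (-(binEnt δ * n)) ≤ 1 := by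
    calc (S.card : ℝ) * (2:ℝ) ^ (-(binEnt δ * n))
        = ∑ _x ∈ S, (2:ℝ) ^ (-(binEnt δ * n)) := by rw [Finset.sum_const, nsmul_eq_mul]
      _ ≤ ∑ x ∈ S, δ ^ (hammingNorm x) * (1 - δ) ^ (n - hammingNorm x) := by
          apply Finset.sum_le_sum
          intro x hx
          have hx' := (Finset.mem_filter.mp hx).2
          have hmn : hammingNorm x ≤ n := by
            have : (Finset.univ.filter fun i => x i ≠ 0).card ≤ Finset.univ.card :=
              Finset.card_filter_le _ _
            simpa [hammingNorm, hn] using this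
          exact weight_lower h0 h2 hmn hx'
      _ ≤ ∑ x : ι → ZMod 2, δ ^ (hammingNorm x) * (1 - δ) ^ (n - hammingNorm x) := by
          apply Finset.sum_le_sum_of_subset_of_nonneg (Finset.filter_subset _ _)
          intro x _ _
          positivity
      _ = 1 := sum_weights δ
  have hinv : (2:ℝ) ^ (binEnt δ * (n:ℝ)) = ((2:ℝ) ^ (-(binEnt δ * n)))⁻¹ := by
    rw [← Real.rpow_neg (by norm_num), neg_neg]
  rw [hinv, ← one_div, le_div_iff₀ hq]
  exact step


lemma zmod2_eq_one {a : ZMod 2} (h : a ≠ 0) : a = 1 := by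
  revert a h; decide

lemma aux_exp {k : ℕ} : k * (k - 1) = k * k - k := by
  cases k with
  | zero => simp
  | succ m => simp [Nat.succ_sub_one, Nat.mul_succ]

lemma card_vecMul_fiber {k : ℕ} (u w : Fin k → ZMod 2) (hu : u ≠ 0) :
    (Finset.univ.filter fun A : Matrix (Fin k) (Fin k) (ZMod 2) =>
      Matrix.vecMul u A = w).card ≤ 2 ^ (k * k - k) := by
  classical
  obtain ⟨i₀, hi₀⟩ : ∃ i, u i ≠ 0 := Function.ne_iff.mp hu
  have hcard : Fintype.card ({i : Fin k // i ≠ i₀} → Fin k → ZMod 2) = 2 ^ (k * k - k) := by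
    rw [Fintype.card_fun, Fintype.card_fun]
    rw [Fintype.card_subtype_compl, Fintype.card_subtype_eq]
    have : Fintype.card (ZMod 2) = 2 := by decide
    rw [this, Fintype.card_fin, ← pow_mul, aux_exp]
  calc (Finset.univ.filter fun A : Matrix (Fin k) (Fin k) (ZMod 2) =>
        Matrix.vecMul u A = w).card
      ≤ (Finset.univ : Finset ({i : Fin k // i ≠ i₀} → Fin k → ZMod 2)).card := by
        apply Finset.card_le_card_of_injOn (fun A => fun i j => A i.1 j)
          (fun _ _ => Finset.mem_univ _)
        intro A hA A' hA' hres
        have hA := (Finset.mem_filter.mp hA).2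
        have hA' := (Finset.mem_filter.mp hA').2
        funext i j
        by_cases hi : i = i₀
        · subst hi
          have hsum : ∑ i', u i' * A i' j = ∑ i', u i' * A' i' j := by
            have e1 : ∑ i', u i' * A i' j = w j := congrFun hA j
            have e2 : ∑ i', u i' * A' i' j = w j := congrFun hA' j
            rw [e1, e2]
          rw [← Finset.add_sum_erase _ _ (Finset.mem_univ i),
            ← Finset.add_sum_erase _ _ (Finset.mem_univ i)] at hsum
          have htail : ∑ i' ∈ Finset.univ.erase i, u i' * A i' j
              = ∑ i' ∈ Finset.univ.erase i, u i' * A' i' j := by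
            apply Finset.sum_congr rfl
            intro i' hi'
            have : A i' j = A' i' j :=
              congrFun (congrFun hres ⟨i', Finset.ne_of_mem_erase hi'⟩) j
            rw [this]
          rw [htail] at hsum
          have := add_right_cancel hsum
          exact mul_left_cancel₀ hi₀ this
        · exact congrFun (congrFun hres ⟨i, hi⟩) j
    _ = 2 ^ (k * k - k) := by rw [Finset.card_univ, hcard]

lemma card_mulVec_fiber {k : ℕ} (u w : Fin k → ZMod 2) (hw : w ≠ 0) :
    (Finset.univ.filter fun A : Matrix (Fin k) (Fin k) (ZMod 2) =>
      Matrix.mulVec A w = u).card ≤ 2 ^ (k * k - k) := by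
  classical
  have : (Finset.univ.filter fun A : Matrix (Fin k) (Fin k) (ZMod 2) =>
      Matrix.mulVec A w = u).card
      = (Finset.univ.filter fun B : Matrix (Fin k) (Fin k) (ZMod 2) =>
      Matrix.vecMul w B = u).card := by
    apply Finset.card_bij (fun A _ => A.transpose)
    · intro A hA
      simp only [Finset.mem_filter, Finset.mem_univ, true_and] at *
      rw [Matrix.vecMul_transpose]
      exact hA
    · intro A _ A' _ h
      exact Matrix.transpose_injective h
    · intro B hB
      refine ⟨B.transpose, ?_, by simp⟩
      simp only [Finset.mem_filter, Finset.mem_univ, true_and] at *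
      rw [← Matrix.vecMul_transpose, Matrix.transpose_transpose]
      exact hB
  rw [this]
  exact card_vecMul_fiber w u hw


lemma zmod2_add_eq_zero {a b : ZMod 2} : a + b = 0 ↔ a = b := by revert a b; decide

/-- Generator map `u ↦ (u, uA)` reindexed to `Fin (k+k)`. -/
noncomputable def Gmap (k : ℕ) (A : Matrix (Fin k) (Fin k) (ZMod 2)) :
    (Fin k → ZMod 2) →ₗ[ZMod 2] (Fin (k + k) → ZMod 2) where
  toFun u := fun i => Sum.elim u (Matrix.vecMul u A) (finSumFinEquiv.symm i)
  map_add' u v := by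
    funext i
    cases h : finSumFinEquiv.symm i <;>
      simp [h, Matrix.add_vecMul]
  map_smul' c u := by
    funext i
    cases h : finSumFinEquiv.symm i <;>
      simp [h, Matrix.smul_vecMul]

lemma Gmap_inl {k : ℕ} (A : Matrix (Fin k) (Fin k) (ZMod 2)) (u : Fin k → ZMod 2) (a : Fin k) :
    Gmap k A u (finSumFinEquiv (Sum.inl a)) = u a := by
  show Sum.elim u (Matrix.vecMul u A) (finSumFinEquiv.symm (finSumFinEquiv (Sum.inl a))) = u a
  rw [Equiv.symm_apply_apply]; rfl

lemma Gmap_inr {k : ℕ} (A : Matrix (Fin k) (Fin k) (ZMod 2)) (u : Fin k → ZMod 2) (b : Fin k) :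
    Gmap k A u (finSumFinEquiv (Sum.inr b)) = Matrix.vecMul u A b := by
  show Sum.elim u (Matrix.vecMul u A) (finSumFinEquiv.symm (finSumFinEquiv (Sum.inr b))) = _
  rw [Equiv.symm_apply_apply]; rfl

lemma Gmap_injective {k : ℕ} (A : Matrix (Fin k) (Fin k) (ZMod 2)) :
    Function.Injective (Gmap k A) := by
  intro u v h
  funext a
  have := congrFun h (finSumFinEquiv (Sum.inl a))
  rwa [Gmap_inl, Gmap_inl] at this

/-- reconstruct `x` from its two halves -/
lemma eq_zero_of_halves {k : ℕ} (x : Fin (k + k) → ZMod 2)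
    (hl : ∀ a, x (finSumFinEquiv (Sum.inl a)) = 0)
    (hr : ∀ b, x (finSumFinEquiv (Sum.inr b)) = 0) : x = 0 := by
  funext i
  have : x (finSumFinEquiv (finSumFinEquiv.symm i)) = 0 := by
    cases h : finSumFinEquiv.symm i with
    | inl a => exact hl a
    | inr b => exact hr b
  simpa using this

lemma sum_split {k : ℕ} {M : Type*} [AddCommMonoid M] (g : Fin (k + k) → M) :
    ∑ i, g i = (∑ a, g (finSumFinEquiv (Sum.inl a))) + ∑ b, g (finSumFinEquiv (Sum.inr b)) := by
  rw [← Equiv.sum_comp finSumFinEquiv g, Fintype.sum_sum_type]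

lemma mem_range_halves {k : ℕ} (A : Matrix (Fin k) (Fin k) (ZMod 2))
    {x : Fin (k + k) → ZMod 2} (hx : x ∈ LinearMap.range (Gmap k A)) :
    (fun a => x (finSumFinEquiv (Sum.inl a))) ≠ 0 ∨ x = 0 := by
  obtain ⟨v, hv⟩ := hx
  by_cases hv0 : v = 0
  · right
    rw [← hv, hv0, map_zero]
  · left
    have : (fun a => x (finSumFinEquiv (Sum.inl a))) = v := by
      funext a; rw [← hv, Gmap_inl]
    rw [this]; exact hv0

lemma range_vecMul {k : ℕ} (A : Matrix (Fin k) (Fin k) (ZMod 2))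
    {x : Fin (k + k) → ZMod 2} (hx : x ∈ LinearMap.range (Gmap k A)) :
    Matrix.vecMul (fun a => x (finSumFinEquiv (Sum.inl a))) A
      = fun b => x (finSumFinEquiv (Sum.inr b)) := by
  obtain ⟨v, hv⟩ := hx
  have hl : (fun a => x (finSumFinEquiv (Sum.inl a))) = v := by
    funext a; rw [← hv, Gmap_inl]
  funext b
  rw [hl, ← hv, Gmap_inr]

lemma dual_mulVec {k : ℕ} (A : Matrix (Fin k) (Fin k) (ZMod 2))
    {x : Fin (k + k) → ZMod 2}
    (hx : ∀ c ∈ LinearMap.range (Gmap k A), ∑ i, x i * c i = 0) :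
    Matrix.mulVec A (fun b => x (finSumFinEquiv (Sum.inr b)))
      = fun a => x (finSumFinEquiv (Sum.inl a)) := by
  funext a
  have h := hx (Gmap k A (Pi.single a 1)) ⟨_, rfl⟩
  rw [sum_split] at h
  have e1 : ∑ a', x (finSumFinEquiv (Sum.inl a')) * Gmap k A (Pi.single a 1) (finSumFinEquiv (Sum.inl a'))
      = x (finSumFinEquiv (Sum.inl a)) := by
    simp only [Gmap_inl]
    simp [Pi.single_apply, mul_ite, Finset.sum_ite_eq']
  have e2 : ∑ b, x (finSumFinEquiv (Sum.inr b)) * Gmap k A (Pi.single a 1) (finSumFinEquiv (Sum.inr b))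
      = Matrix.mulVec A (fun b => x (finSumFinEquiv (Sum.inr b))) a := by
    simp only [Gmap_inr]
    have hvm : ∀ b, Matrix.vecMul (Pi.single a 1) A b = A a b := by
      intro b
      simp [Matrix.vecMul, dotProduct, Pi.single_apply, ite_mul, Finset.sum_ite_eq']
    simp only [hvm]
    simp [Matrix.mulVec, dotProduct, mul_comm]
  rw [e1, e2] at h
  exact (zmod2_add_eq_zero.mp h).symm



/-- For every real `δ` with `0 ≤ δ < 1/2` and `h(δ) < 1/2`, for all large enough even `n`
there is a rate-`1/2` binary linear code `C ≤ 𝔽₂ⁿ` such that both `C` and its dual have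
minimum (absolute) distance at least `δ·n`. -/
theorem fast_good_code_with_fast_good_dual_distance
    (δ : ℝ) (hδ0 : 0 ≤ δ) (hδhalf : δ < 1 / 2) (hδent : binEnt δ < 1 / 2) :
    ∃ N : ℕ, ∀ n : ℕ, N ≤ n → Even n →
      ∃ C : Submodule (ZMod 2) (Fin n → ZMod 2),
        Module.finrank (ZMod 2) C = n / 2 ∧
        (∀ c ∈ C, c ≠ 0 → δ * n ≤ (hammingNorm c : ℝ)) ∧
        (∀ x : Fin n → ZMod 2,
          (∀ c ∈ C, ∑ i, x i * c i = 0) → x ≠ 0 → δ * n ≤ (hammingNorm x : ℝ)) := by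
  classical
  set ε : ℝ := 1 / 2 - binEnt δ with hε
  have hεpos : 0 < ε := by simp [hε]; linarith
  refine ⟨⌈1 / ε⌉₊ + 1, ?_⟩
  intro n hN hEven
  obtain ⟨k, rfl⟩ := hEven
  have hk1 : 1 ≤ k := by
    by_contra hk
    interval_cases k <;> omega
  -- the set of "bad" words
  set badX : Finset (Fin (k + k) → ZMod 2) :=
    Finset.univ.filter (fun x => (hammingNorm x : ℝ) ≤ δ * ((k + k : ℕ) : ℝ)) with hbadX
  set B : ℕ := badX.card with hB
  -- bound on B
  have hBle : (B : ℝ) ≤ (2 : ℝ) ^ (binEnt δ * ((k + k : ℕ) : ℝ)) := by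
    rcases eq_or_lt_of_le hδ0 with h | h
    · have hent0 : binEnt δ = 0 := by
        rw [← h]; simp [binEnt]
      have hsub : badX ⊆ {0} := by
        intro x hx
        have hx' := (Finset.mem_filter.mp hx).2
        rw [← h] at hx'
        simp only [zero_mul] at hx'
        have : hammingNorm x = 0 := by
          have := Nat.cast_nonneg (α := ℝ) (hammingNorm x)
          have : (hammingNorm x : ℝ) = 0 := le_antisymm hx' this
          exact_mod_cast this
        rw [Finset.mem_singleton]
        exact hammingNorm_eq_zero.mp this
      have := Finset.card_le_card hsub
      rw [Finset.card_singleton] at this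
      rw [hent0, zero_mul, Real.rpow_zero]
      exact_mod_cast this
    · have := card_small_le (ι := Fin (k + k)) h hδhalf
      rwa [Fintype.card_fin] at this
  -- numeric bound : 2 * B < 2 ^ k
  have hnum : 2 * B < 2 ^ k := by
    have hceil : (1 / ε : ℝ) ≤ (⌈1 / ε⌉₊ : ℕ) := Nat.le_ceil _
    have hn : ((⌈1 / ε⌉₊ + 1 : ℕ) : ℝ) ≤ ((k + k : ℕ) : ℝ) := by exact_mod_cast hN
    have hne : 1 < ε * ((k + k : ℕ) : ℝ) := by
      have h1 : (1 / ε : ℝ) + 1 ≤ ((k + k : ℕ) : ℝ) := by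
        push_cast at hn ⊢; linarith
      have := mul_le_mul_of_nonneg_left h1 hεpos.le
      rw [mul_add, mul_one_div, div_self hεpos.ne'] at this
      nlinarith
    have hexp : binEnt δ * ((k + k : ℕ) : ℝ) + 1 < (k : ℝ) := by
      have hkk : ((k + k : ℕ) : ℝ) = 2 * (k : ℝ) := by push_cast; ring
      rw [hkk] at hne ⊢
      have : binEnt δ = 1 / 2 - ε := by rw [hε]; ring
      rw [this]
      ring_nf
      ring_nf at hne
      linarith
    have hreal : (2 * B : ℝ) < (2 : ℝ) ^ ((k : ℕ) : ℝ) := by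
      calc (2 * B : ℝ) ≤ 2 * (2 : ℝ) ^ (binEnt δ * ((k + k : ℕ) : ℝ)) := by linarith
        _ = (2 : ℝ) ^ (binEnt δ * ((k + k : ℕ) : ℝ) + 1) := by
            rw [Real.rpow_add two_pos, Real.rpow_one]; ring
        _ < (2 : ℝ) ^ ((k : ℕ) : ℝ) :=
            Real.rpow_lt_rpow_of_exponent_lt one_lt_two hexp
    have h2k : (2 : ℝ) ^ ((k : ℕ) : ℝ) = ((2 ^ k : ℕ) : ℝ) := by
      rw [Real.rpow_natCast]; push_cast; ring
    rw [h2k] at hreal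
    exact_mod_cast hreal
  -- find a good matrix A
  have hgood : ∃ A : Matrix (Fin k) (Fin k) (ZMod 2),
      ¬ ∃ x : Fin (k + k) → ZMod 2, x ≠ 0 ∧ (hammingNorm x : ℝ) < δ * ((k + k : ℕ) : ℝ) ∧
        (x ∈ LinearMap.range (Gmap k A) ∨
          ∀ c ∈ LinearMap.range (Gmap k A), ∑ i, x i * c i = 0) := by
    by_contra hcon
    push_neg at hcon
    set S : (Fin (k + k) → ZMod 2) → Finset (Matrix (Fin k) (Fin k) (ZMod 2)) := fun x =>
      (Finset.univ.filter fun A =>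
        ((fun a => x (finSumFinEquiv (Sum.inl a))) ≠ 0 ∧
          Matrix.vecMul (fun a => x (finSumFinEquiv (Sum.inl a))) A
            = fun b => x (finSumFinEquiv (Sum.inr b)))) ∪
      (Finset.univ.filter fun A =>
        ((fun b => x (finSumFinEquiv (Sum.inr b))) ≠ 0 ∧
          Matrix.mulVec A (fun b => x (finSumFinEquiv (Sum.inr b)))
            = fun a => x (finSumFinEquiv (Sum.inl a)))) with hSdef
    have hsub : (Finset.univ : Finset (Matrix (Fin k) (Fin k) (ZMod 2)))
        ⊆ badX.biUnion S := by
      intro A _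
      obtain ⟨x, hx0, hxnorm, hxmem⟩ := hcon A
      refine Finset.mem_biUnion.mpr ⟨x, ?_, ?_⟩
      · exact Finset.mem_filter.mpr ⟨Finset.mem_univ _, le_of_lt hxnorm⟩
      · rw [hSdef]
        rcases hxmem with hmem | hdual
        · apply Finset.mem_union_left
          refine Finset.mem_filter.mpr ⟨Finset.mem_univ _, ?_, range_vecMul A hmem⟩
          rcases mem_range_halves A hmem with h | h
          · exact h
          · exact absurd h hx0
        · apply Finset.mem_union_right
          have hmv := dual_mulVec A hdual
          refine Finset.mem_filter.mpr ⟨Finset.mem_univ _, ?_, hmv⟩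
          intro hr0
          apply hx0
          apply eq_zero_of_halves
          · intro a
            have := congrFun hmv a
            rw [hr0] at this
            simpa using this.symm
          · intro b
            exact congrFun hr0 b
    have hScard : ∀ x, (S x).card ≤ 2 * 2 ^ (k * k - k) := by
      intro x
      rw [hSdef]
      refine le_trans (Finset.card_union_le _ _) ?_
      have h1 : (Finset.univ.filter fun A : Matrix (Fin k) (Fin k) (ZMod 2) =>
          ((fun a => x (finSumFinEquiv (Sum.inl a))) ≠ 0 ∧
            Matrix.vecMul (fun a => x (finSumFinEquiv (Sum.inl a))) A
              = fun b => x (finSumFinEquiv (Sum.inr b)))).card ≤ 2 ^ (k * k - k) := by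
        by_cases hu : (fun a => x (finSumFinEquiv (Sum.inl a))) = (0 : Fin k → ZMod 2)
        · rw [Finset.filter_false_of_mem, Finset.card_empty]
          · positivity
          · intro A _ h; exact h.1 hu
        · refine le_trans (Finset.card_le_card ?_)
            (card_vecMul_fiber (fun a => x (finSumFinEquiv (Sum.inl a)))
              (fun b => x (finSumFinEquiv (Sum.inr b))) hu)
          intro A hA
          exact Finset.mem_filter.mpr ⟨Finset.mem_univ _, (Finset.mem_filter.mp hA).2.2⟩
      have h2 : (Finset.univ.filter fun A : Matrix (Fin k) (Fin k) (ZMod 2) =>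
          ((fun b => x (finSumFinEquiv (Sum.inr b))) ≠ 0 ∧
            Matrix.mulVec A (fun b => x (finSumFinEquiv (Sum.inr b)))
              = fun a => x (finSumFinEquiv (Sum.inl a)))).card ≤ 2 ^ (k * k - k) := by
        by_cases hw : (fun b => x (finSumFinEquiv (Sum.inr b))) = (0 : Fin k → ZMod 2)
        · rw [Finset.filter_false_of_mem, Finset.card_empty]
          · positivity
          · intro A _ h; exact h.1 hw
        · refine le_trans (Finset.card_le_card ?_)
            (card_mulVec_fiber (fun a => x (finSumFinEquiv (Sum.inl a)))
              (fun b => x (finSumFinEquiv (Sum.inr b))) hw)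
          intro A hA
          exact Finset.mem_filter.mpr ⟨Finset.mem_univ _, (Finset.mem_filter.mp hA).2.2⟩
      omega
    have hcount : 2 ^ (k * k) ≤ B * (2 * 2 ^ (k * k - k)) := by
      calc 2 ^ (k * k)
          = (Finset.univ : Finset (Matrix (Fin k) (Fin k) (ZMod 2))).card := by
            rw [Finset.card_univ, Fintype.card_congr (Matrix.of (m := Fin k) (n := Fin k)
              (α := ZMod 2)).symm]
            have h2 : Fintype.card (ZMod 2) = 2 := by decide
            rw [Fintype.card_fun, Fintype.card_fun, h2, Fintype.card_fin, ← pow_mul]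
        _ ≤ (badX.biUnion S).card := Finset.card_le_card hsub
        _ ≤ ∑ x ∈ badX, (S x).card := Finset.card_biUnion_le
        _ ≤ ∑ _x ∈ badX, 2 * 2 ^ (k * k - k) := Finset.sum_le_sum fun x _ => hScard x
        _ = B * (2 * 2 ^ (k * k - k)) := by rw [Finset.sum_const, smul_eq_mul, hB]
    -- contradiction with hnum
    have hsplit : 2 ^ (k * k) = 2 ^ k * 2 ^ (k * k - k) := by
      rw [← pow_add]
      congr 1
      have : k ≤ k * k := Nat.le_mul_of_pos_left k hk1
      omega
    have hpow : 0 < 2 ^ (k * k - k) := Nat.pow_pos (by norm_num)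
    nlinarith [hcount, hnum, hsplit, hpow]
  obtain ⟨A, hA⟩ := hgood
  push_neg at hA
  refine ⟨LinearMap.range (Gmap k A), ?_, ?_, ?_⟩
  · rw [LinearMap.finrank_range_of_inj (Gmap_injective A), Module.finrank_fin_fun]
    omega
  · intro c hc hc0
    by_contra hlt
    push_neg at hlt
    exact (hA c hc0 hlt).1 hc
  · intro x hx hx0
    by_contra hlt
    push_neg at hlt
    obtain ⟨c', hc', hne⟩ := (hA x hx0 hlt).2
    exact hne (hx c' hc')
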